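/- Let g : V' → ℂ be analytic on a domain containing a real interval, real-valued on the real axis, with g(h) → m* as h ↘ 0 for real h, and such that the right derivative limit lim_{h↘0} (g(h) − m*)/h = c exists with c ≠ 0. If there exists an analytic function h̃ on a neighborhood of m* with h̃(g(h)) = h for real h > 0 small and h̃(m*) = 0, then h̃'(m*) = 1/c ≠ 0, and by the biholomorphic mapping theorem h̃ has an analytic inverse near 0 which coincides with g on small positive reals; hence g extends analytically to a neighborhood of 0. -/

import Mathlib

open Filter Set Topology

/-- If `g` is analytic on a domain containing a real interval `(0, ε)`,
real-valued there, `g(h) → m*` as `h ↘ 0`, the right-derivative limit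
`(g(h) − m*)/h → c ≠ 0` exists, and there is an analytic `h̃` near `m*` with
`h̃(g(h)) = h` for small real `h > 0` and `h̃(m*) = 0`, then `h̃'(m*) = 1/c ≠ 0`
and (by the biholomorphic mapping theorem) `g` extends analytically to a
neighborhood of `0`. -/
theorem stmt_16 (g : ℂ → ℂ) (U : Set ℂ) (hU : IsOpen U) (ε : ℝ) (hε : 0 < ε)
    (hsub : ∀ x : ℝ, 0 < x → x < ε → (x : ℂ) ∈ U)
    (hg : DifferentiableOn ℂ g U)
    (hreal : ∀ x : ℝ, 0 < x → x < ε → (g (x : ℂ)).im = 0)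
    (mstar c : ℝ) (hc : c ≠ 0)
    (hlim : Filter.Tendsto (fun x : ℝ => g (x : ℂ))
      (nhdsWithin 0 (Set.Ioi 0)) (nhds (mstar : ℂ)))
    (hder : Filter.Tendsto (fun x : ℝ => (g (x : ℂ) - (mstar : ℂ)) / (x : ℂ))
      (nhdsWithin 0 (Set.Ioi 0)) (nhds (c : ℂ)))
    (htld : ℂ → ℂ) (W : Set ℂ) (hW : IsOpen W) (hmW : (mstar : ℂ) ∈ W)
    (hht : DifferentiableOn ℂ htld W)
    (hinv : ∀ᶠ x : ℝ in nhdsWithin 0 (Set.Ioi 0), htld (g (x : ℂ)) = (x : ℂ))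
    (h0 : htld (mstar : ℂ) = 0) :
    deriv htld (mstar : ℂ) = 1 / (c : ℂ) ∧
      ∃ G : ℂ → ℂ, ∃ V ∈ nhds (0 : ℂ), DifferentiableOn ℂ G V ∧
        ∀ᶠ x : ℝ in nhdsWithin 0 (Set.Ioi 0), G (x : ℂ) = g (x : ℂ) := by
  have hcC : (c : ℂ) ≠ 0 := by exact_mod_cast hc
  set l : Filter ℝ := nhdsWithin 0 (Set.Ioi 0) with hl
  -- eventually x > 0 and g x ≠ mstar
  have hxpos : ∀ᶠ x : ℝ in l, 0 < x := self_mem_nhdsWithin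
  have hne : ∀ᶠ x : ℝ in l, g (x : ℂ) ≠ (mstar : ℂ) := by
    filter_upwards [hder.eventually_ne hcC, hxpos] with x hx hxp
    intro h
    apply hx
    simp [h]
  -- htld is analytic at mstar
  have hanal : AnalyticAt ℂ htld (mstar : ℂ) := hht.analyticAt (hW.mem_nhds hmW)
  obtain ⟨p, hp⟩ := hanal
  have hstrict0 := hp.hasStrictDerivAt
  have hderiv_eq : deriv htld (mstar : ℂ) = (p 1 fun _ => 1) :=
    hstrict0.hasDerivAt.deriv
  set d := deriv htld (mstar : ℂ) with hd
  have hstrict : HasStrictDerivAt htld d (mstar : ℂ) := by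
    rw [hderiv_eq]; exact hstrict0
  -- slope limit
  have hgt : Filter.Tendsto (fun x : ℝ => g (x : ℂ)) l (nhdsWithin (mstar : ℂ) {(mstar : ℂ)}ᶜ) := by
    rw [tendsto_nhdsWithin_iff]
    exact ⟨hlim, hne⟩
  have hslope : Filter.Tendsto (slope htld (mstar : ℂ)) (nhdsWithin (mstar : ℂ) {(mstar : ℂ)}ᶜ)
      (nhds d) := hasDerivAt_iff_tendsto_slope.mp hstrict.hasDerivAt
  have h1 : Filter.Tendsto (fun x : ℝ => (x : ℂ) / (g (x : ℂ) - (mstar : ℂ))) l (nhds d) := by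
    refine (hslope.comp hgt).congr' ?_
    filter_upwards [hinv] with x hx
    simp only [Function.comp, slope_def_field]
    rw [hx, h0, sub_zero]
  have hprod : Filter.Tendsto
      (fun x : ℝ => ((x : ℂ) / (g (x : ℂ) - (mstar : ℂ))) * ((g (x : ℂ) - (mstar : ℂ)) / (x : ℂ)))
      l (nhds (d * c)) := h1.mul hder
  have hone : ∀ᶠ x : ℝ in l,
      ((x : ℂ) / (g (x : ℂ) - (mstar : ℂ))) * ((g (x : ℂ) - (mstar : ℂ)) / (x : ℂ)) = 1 := by
    filter_upwards [hxpos, hne] with x hxp hgx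
    have hx0 : (x : ℂ) ≠ 0 := by exact_mod_cast hxp.ne'
    field_simp
  have hdc : d * c = 1 := by
    have : Filter.Tendsto (fun _ : ℝ => (1 : ℂ)) l (nhds (d * c)) := hprod.congr' hone
    exact (tendsto_nhds_unique tendsto_const_nhds this).symm
  have hdval : d = 1 / (c : ℂ) := by
    field_simp [hcC] at hdc ⊢
    linear_combination hdc
  have hd0 : d ≠ 0 := by rw [hdval]; simp [hcC]
  refine ⟨hdval, ?_⟩
  -- the local inverse
  set e := (hstrict.hasStrictFDerivAt_equiv hd0).toOpenPartialHomeomorph htld with he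
  have hsrc : (mstar : ℂ) ∈ e.source :=
    (hstrict.hasStrictFDerivAt_equiv hd0).mem_toOpenPartialHomeomorph_source
  have htgt : (0 : ℂ) ∈ e.target := by
    have := (hstrict.hasStrictFDerivAt_equiv hd0).image_mem_toOpenPartialHomeomorph_target
    rw [← h0]
    exact this
  have hefun : ∀ z, e z = htld z := fun _ => rfl
  -- deriv htld is continuous on W
  have hderivW : ContinuousOn (deriv htld) W := ((hht.analyticOnNhd hW).deriv).continuousOn
  -- the good set N around mstar
  set N : Set ℂ := {z ∈ W | deriv htld z ≠ 0} with hN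
  have hNopen : IsOpen N := by
    have : N = W ∩ (deriv htld) ⁻¹' {0}ᶜ := rfl
    rw [this]
    exact hderivW.isOpen_inter_preimage hW isOpen_compl_singleton
  have hmN : (mstar : ℂ) ∈ N := ⟨hmW, hd0⟩
  set V : Set ℂ := e.target ∩ e.symm ⁻¹' N with hV
  have hVopen : IsOpen V := e.isOpen_inter_preimage_symm hNopen
  have hesymm0 : e.symm 0 = (mstar : ℂ) := by
    rw [show (0 : ℂ) = e (mstar : ℂ) by rw [hefun, h0]]
    exact e.left_inv hsrc
  have h0V : (0 : ℂ) ∈ V := ⟨htgt, by rw [Set.mem_preimage, hesymm0]; exact hmN⟩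
  refine ⟨e.symm, V, hVopen.mem_nhds h0V, ?_, ?_⟩
  · -- differentiability of the inverse on V
    intro y hy
    have hyt : y ∈ e.target := hy.1
    have hyN : e.symm y ∈ N := hy.2
    have hcont : ContinuousAt e.symm y :=
      e.continuousOn_symm.continuousAt (e.open_target.mem_nhds hyt)
    have hfd : HasDerivAt htld (deriv htld (e.symm y)) (e.symm y) :=
      (hht.differentiableAt (hW.mem_nhds hyN.1)).hasDerivAt
    have hev : ∀ᶠ z in nhds y, htld (e.symm z) = z := by
      filter_upwards [e.open_target.mem_nhds hyt] with z hz
      exact e.right_inv hz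
    exact (HasDerivAt.of_local_left_inverse hcont hfd hyN.2 hev).differentiableAt.differentiableWithinAt
  · -- coincidence with g on small positive reals
    have hleft : ∀ᶠ z in nhds (mstar : ℂ), e.symm (htld z) = z := by
      filter_upwards [e.open_source.mem_nhds hsrc] with z hz
      exact e.left_inv hz
    filter_upwards [hinv, hlim.eventually hleft] with x hx1 hx2
    rw [hx1] at hx2
    exact hx2
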